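/- With the differential-algebra setting of Griewank's Lemma: if w depends on x_j only through derivatives of order ≤ q, then for 0 ≤ r ≤ p, ∂w^{(p)}/∂x_j^{(q+r)} may be nonzero only for appropriate shifts, and in particular w^{(p)} depends on x_j only through derivatives x_j^{(k)} with k ≤ q + p. -/
import Mathlib


open MvPolynomial

/-- Differential polynomials in the formal variables `t` (= `none`) and
`x_j^{(k)}` (= `some (j, k)`), with real coefficients. -/
abbrev DPoly (n : ℕ) := MvPolynomial (Option (Fin n × ℕ)) ℝ

/-- The formal variable `x_j^{(k)}`. -/
noncomputable def Xv {n : ℕ} (j : Fin n) (k : ℕ) : DPoly n := X (some (j, k))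

/-- The total time derivative operator `D`, acting by the chain rule:
`D w = ∂w/∂t + ∑_{j,k} (∂w/∂x_j^{(k)}) · x_j^{(k+1)}`. -/
noncomputable def Dop {n : ℕ} : DPoly n → DPoly n :=
  MvPolynomial.mkDerivation ℝ fun v : Option (Fin n × ℕ) =>
    match v with
    | none => (1 : DPoly n)
    | some (j, k) => Xv j (k + 1)

/-- `Dop` as a bundled derivation. -/
noncomputable def Dder {n : ℕ} : Derivation ℝ (DPoly n) (DPoly n) :=
  MvPolynomial.mkDerivation ℝ fun v : Option (Fin n × ℕ) =>
    match v with
    | none => (1 : DPoly n)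
    | some (j, k) => Xv j (k + 1)

lemma Dop_eq {n : ℕ} : (Dop : DPoly n → DPoly n) = ⇑(Dder (n := n)) := rfl

/-- The commutator `[∂/∂x_j^{(k+1)}, D] = ∂/∂x_j^{(k)}`. -/
lemma comm_lemma {n : ℕ} (j : Fin n) (k : ℕ) :
    ⁅(pderiv (some (j, k+1)) : Derivation ℝ (DPoly n) (DPoly n)), Dder⁆
      = pderiv (some (j, k)) := by
  apply MvPolynomial.derivation_ext
  intro v
  rw [Derivation.commutator_apply]
  match v with
  | none =>
      simp [Dder, mkDerivation_X, pderiv_X, Pi.single_apply, Xv]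
  | some (i, m) =>
      simp only [Dder, mkDerivation_X, pderiv_X, Xv, Pi.single_apply]
      by_cases h : i = j
      · subst h
        by_cases hm : m = k
        · subst hm; simp
        · split_ifs <;> simp_all
      · split_ifs <;> simp_all

lemma pderiv_Dop {n : ℕ} (j : Fin n) (k : ℕ) (w : DPoly n) :
    pderiv (some (j, k+1)) (Dop w)
      = Dop (pderiv (some (j, k+1)) w) + pderiv (some (j, k)) w := by
  have := congrArg (fun D : Derivation ℝ (DPoly n) (DPoly n) => D w) (comm_lemma j k)
  simp only [Derivation.commutator_apply] at this
  rw [Dop_eq]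
  linear_combination (norm := module) this

/-- If `w` depends on `x_j` only through derivatives of order `≤ q`, then
`D^p w` depends on `x_j` only through derivatives of order `≤ q + p`. -/
theorem stmt4 {n : ℕ} (w : DPoly n) (j : Fin n) (q : ℕ)
    (hq : ∀ k, q < k → pderiv (some (j, k)) w = 0) :
    ∀ p k : ℕ, q + p < k → pderiv (some (j, k)) (Dop^[p] w) = 0 := by
  intro p
  induction p with
  | zero => intro k hk; simpa using hq k (by omega)
  | succ p ih =>
      intro k hk
      obtain ⟨m, rfl⟩ : ∃ m, k = m + 1 := ⟨k - 1, by omega⟩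
      rw [Function.iterate_succ_apply', pderiv_Dop,
        ih (m+1) (by omega), ih m (by omega), Dop_eq, map_zero, add_zero]
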